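/- Let F(z) be the monotone-like operator built from convex data: F(x,λ,μ,ω,ν) = (∇f(x) + ∂g(x)ᵀλ + Aᵀμ, -g(x) + Lω, -Ax + b + Lν, -Lλ, -Lμ) with f, g convex differentiable and L symmetric positive semidefinite. If z* satisfies -F(z*) ∈ N_Θ(z*) on Θ = Ω × ℝᵖ₊ × ℝ^{p+2q}, then for all z ∈ Θ and η = F(z): ⟪z - z*, η⟫ ≥ L(x, λ*, μ*, ω, ν) - L(x*, λ, μ, ω*, ν*) ≥ 0, where L is the associated Lagrangian. -/

import Mathlib

open scoped RealInnerProductSpace BigOperators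

lemma grad_convex_ineq {E : Type*} [NormedAddCommGroup E] [InnerProductSpace ℝ E]
    [CompleteSpace E]
    {Ω : Set E} {f : E → ℝ} (hdiff : Differentiable ℝ f)
    (hconv : ConvexOn ℝ Ω f) {x y : E} (hx : x ∈ Ω) (hy : y ∈ Ω) :
    ⟪gradient f x, y - x⟫ ≤ f y - f x := by
  have hinner : ⟪gradient f x, y - x⟫ = fderiv ℝ f x (y - x) := by
    rw [gradient, InnerProductSpace.toDual_symm_apply]
  rw [hinner]
  set φ : ℝ → E := fun t => x + t • (y - x) with hφ
  have hc : HasDerivAt φ (y - x) 0 := by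
    simpa [hφ] using ((hasDerivAt_id (0:ℝ)).smul_const (y - x)).const_add x
  have hφ0 : φ 0 = x := by simp [hφ]
  have hcomp : HasDerivAt (f ∘ φ) (fderiv ℝ f x (y - x)) 0 := by
    refine HasFDerivAt.comp_hasDerivAt 0 ?_ hc
    rw [hφ0]; exact (hdiff x).hasFDerivAt
  rw [hasDerivAt_iff_tendsto_slope] at hcomp
  have h2 : Filter.Tendsto (slope (f ∘ φ) 0) (nhdsWithin 0 (Set.Ioi 0))
      (nhds (fderiv ℝ f x (y - x))) :=
    hcomp.mono_left (nhdsWithin_mono _ (fun t ht => ne_of_gt ht))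
  refine le_of_tendsto h2 ?_
  filter_upwards [Ioc_mem_nhdsGT_of_mem (Set.left_mem_Ico.2 one_pos)] with t ht
  have hφt : φ t = (1 - t) • x + t • y := by
    simp [hφ, smul_sub, sub_smul]; abel
  have hcvx := hconv.2 hx hy (by linarith [ht.2] : (0:ℝ) ≤ 1 - t) (le_of_lt ht.1)
    (by ring)
  rw [← hφt] at hcvx
  have ht0 : (0:ℝ) < t := ht.1
  have : slope (f ∘ φ) 0 t = (f (φ t) - f x) / t := by
    simp [slope, hφ0]; ring
  rw [this, div_le_iff₀ ht0]
  simp only [smul_eq_mul] at hcvx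
  nlinarith [hcvx]

/-- Inequality (16) (smooth single-agent version): for the operator
`F(x,λ,μ,ω,ν) = (∇f(x) + ∑ₖ λₖ∇gₖ(x) + Aᵀμ, -g(x) + Lpω, -Ax + b + Lqν, -Lpλ, -Lqμ)`
built from convex data, if `z* ∈ Θ = Ω × ℝᵖ₊ × ℝ^{p+2q}` satisfies
`-F(z*) ∈ N_Θ(z*)`, then for every `z ∈ Θ`,
`⟪z - z*, F(z)⟫ ≥ L(x,λ*,μ*,ω,ν) - L(x*,λ,μ,ω*,ν*) ≥ 0`, where
`L(x,λ,μ,ω,ν) = f(x) + ⟪λ, g(x) - Lpω⟫ + ⟪μ, Ax - b - Lqν⟫`. -/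
theorem operator_saddle_inequality
    {n p q : ℕ}
    (Ω : Set (EuclideanSpace ℝ (Fin n)))
    (hconvΩ : Convex ℝ Ω) (hclosed : IsClosed Ω)
    (f : EuclideanSpace ℝ (Fin n) → ℝ)
    (hfdiff : Differentiable ℝ f) (hfconv : ConvexOn ℝ Ω f)
    (g : Fin p → EuclideanSpace ℝ (Fin n) → ℝ)
    (hgdiff : ∀ k, Differentiable ℝ (g k)) (hgconv : ∀ k, ConvexOn ℝ Ω (g k))
    (gv : EuclideanSpace ℝ (Fin n) → EuclideanSpace ℝ (Fin p))
    (hgv : ∀ x k, gv x k = g k x)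
    (A : EuclideanSpace ℝ (Fin n) →ₗ[ℝ] EuclideanSpace ℝ (Fin q))
    (b : EuclideanSpace ℝ (Fin q))
    (Lp : EuclideanSpace ℝ (Fin p) →ₗ[ℝ] EuclideanSpace ℝ (Fin p))
    (Lq : EuclideanSpace ℝ (Fin q) →ₗ[ℝ] EuclideanSpace ℝ (Fin q))
    (hLpsymm : ∀ u v, ⟪Lp u, v⟫ = ⟪u, Lp v⟫) (hLppsd : ∀ v, 0 ≤ ⟪v, Lp v⟫)
    (hLqsymm : ∀ u v, ⟪Lq u, v⟫ = ⟪u, Lq v⟫) (hLqpsd : ∀ v, 0 ≤ ⟪v, Lq v⟫)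
    -- the Lagrangian
    (Lag : EuclideanSpace ℝ (Fin n) → EuclideanSpace ℝ (Fin p) →
      EuclideanSpace ℝ (Fin q) → EuclideanSpace ℝ (Fin p) →
      EuclideanSpace ℝ (Fin q) → ℝ)
    (hLag : ∀ x lam μ ω ν, Lag x lam μ ω ν
      = f x + ⟪lam, gv x - Lp ω⟫ + ⟪μ, A x - b - Lq ν⟫)
    -- the five components of the operator F
    (F1 : EuclideanSpace ℝ (Fin n) → EuclideanSpace ℝ (Fin p) →
      EuclideanSpace ℝ (Fin q) → EuclideanSpace ℝ (Fin n))
    (hF1 : ∀ x lam μ, F1 x lam μ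
      = gradient f x + ∑ k, lam k • gradient (g k) x + (LinearMap.adjoint A) μ)
    (F2 : EuclideanSpace ℝ (Fin n) → EuclideanSpace ℝ (Fin p) →
      EuclideanSpace ℝ (Fin p))
    (hF2 : ∀ x ω, F2 x ω = -gv x + Lp ω)
    (F3 : EuclideanSpace ℝ (Fin n) → EuclideanSpace ℝ (Fin q) →
      EuclideanSpace ℝ (Fin q))
    (hF3 : ∀ x ν, F3 x ν = -(A x) + b + Lq ν)
    -- the saddle point z* ∈ Θ
    (xs : EuclideanSpace ℝ (Fin n)) (lams ωs : EuclideanSpace ℝ (Fin p))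
    (μs νs : EuclideanSpace ℝ (Fin q))
    (hxs : xs ∈ Ω) (hlams : ∀ k, 0 ≤ lams k)
    -- the normal-cone condition -F(z*) ∈ N_Θ(z*)
    (hVI : ∀ x ∈ Ω, ∀ lam : EuclideanSpace ℝ (Fin p), (∀ k, 0 ≤ lam k) →
      ∀ (μ : EuclideanSpace ℝ (Fin q)) (ω : EuclideanSpace ℝ (Fin p))
        (ν : EuclideanSpace ℝ (Fin q)),
      0 ≤ ⟪F1 xs lams μs, x - xs⟫ + ⟪F2 xs ωs, lam - lams⟫
        + ⟪F3 xs νs, μ - μs⟫ + ⟪-Lp lams, ω - ωs⟫ + ⟪-Lq μs, ν - νs⟫) :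
    ∀ x ∈ Ω, ∀ lam : EuclideanSpace ℝ (Fin p), (∀ k, 0 ≤ lam k) →
      ∀ (μ : EuclideanSpace ℝ (Fin q)) (ω : EuclideanSpace ℝ (Fin p))
        (ν : EuclideanSpace ℝ (Fin q)),
      Lag x lams μs ω ν - Lag xs lam μ ωs νs
        ≤ ⟪x - xs, F1 x lam μ⟫ + ⟪lam - lams, F2 x ω⟫ + ⟪μ - μs, F3 x ν⟫
          + ⟪ω - ωs, -Lp lam⟫ + ⟪ν - νs, -Lq μ⟫ ∧
      0 ≤ Lag x lams μs ω ν - Lag xs lam μ ωs νs := by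
  intro x hx lam hlam μ ω ν
  -- gradient (convexity) inequalities
  have hfx : ⟪gradient f x, xs - x⟫ ≤ f xs - f x :=
    grad_convex_ineq hfdiff hfconv hx hxs
  have hfxs : ⟪gradient f xs, x - xs⟫ ≤ f x - f xs :=
    grad_convex_ineq hfdiff hfconv hxs hx
  have hgx : ∀ k, ⟪gradient (g k) x, xs - x⟫ ≤ g k xs - g k x := fun k =>
    grad_convex_ineq (hgdiff k) (hgconv k) hx hxs
  have hgxs : ∀ k, ⟪gradient (g k) xs, x - xs⟫ ≤ g k x - g k xs := fun k =>
    grad_convex_ineq (hgdiff k) (hgconv k) hxs hx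
  -- inner products over EuclideanSpace as sums
  have hip : ∀ u v : EuclideanSpace ℝ (Fin p), ⟪u, v⟫ = ∑ k, u k * v k := by
    intro u v
    simp [PiLp.inner_apply, RCLike.inner_apply, conj_trivial]
    exact Finset.sum_congr rfl fun _ _ => mul_comm _ _
  have hip1 : ⟪lam, gv x⟫ = ∑ k, lam k * g k x := by
    rw [hip]; exact Finset.sum_congr rfl fun k _ => by rw [hgv]
  have hip2 : ⟪lam, gv xs⟫ = ∑ k, lam k * g k xs := by
    rw [hip]; exact Finset.sum_congr rfl fun k _ => by rw [hgv]
  have hip3 : ⟪lams, gv x⟫ = ∑ k, lams k * g k x := by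
    rw [hip]; exact Finset.sum_congr rfl fun k _ => by rw [hgv]
  have hip4 : ⟪lams, gv xs⟫ = ∑ k, lams k * g k xs := by
    rw [hip]; exact Finset.sum_congr rfl fun k _ => by rw [hgv]
  have hip5 : ⟪gv xs, lam⟫ = ∑ k, lam k * g k xs := by
    rw [real_inner_comm]; exact hip2
  have hip6 : ⟪gv xs, lams⟫ = ∑ k, lams k * g k xs := by
    rw [real_inner_comm]; exact hip4
  -- symmetry / commutativity facts
  have c1 : ⟪A x, μ⟫ = ⟪μ, A x⟫ := real_inner_comm _ _
  have c2 : ⟪A xs, μ⟫ = ⟪μ, A xs⟫ := real_inner_comm _ _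
  have c3 : ⟪ω, Lp lam⟫ = ⟪lam, Lp ω⟫ := by
    rw [real_inner_comm, hLpsymm]
  have c4 : ⟪ωs, Lp lam⟫ = ⟪lam, Lp ωs⟫ := by
    rw [real_inner_comm, hLpsymm]
  have c5 : ⟪ν, Lq μ⟫ = ⟪μ, Lq ν⟫ := by
    rw [real_inner_comm, hLqsymm]
  have c6 : ⟪νs, Lq μ⟫ = ⟪μ, Lq νs⟫ := by
    rw [real_inner_comm, hLqsymm]
  have c7 : ⟪Lp ωs, lam⟫ = ⟪lam, Lp ωs⟫ := real_inner_comm _ _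
  have c8 : ⟪Lp ωs, lams⟫ = ⟪lams, Lp ωs⟫ := real_inner_comm _ _
  have c9 : ⟪Lp lams, ω⟫ = ⟪lams, Lp ω⟫ := hLpsymm _ _
  have c10 : ⟪Lp lams, ωs⟫ = ⟪lams, Lp ωs⟫ := hLpsymm _ _
  have c11 : ⟪Lq νs, μ⟫ = ⟪μ, Lq νs⟫ := real_inner_comm _ _
  have c12 : ⟪Lq νs, μs⟫ = ⟪μs, Lq νs⟫ := real_inner_comm _ _
  have c13 : ⟪Lq μs, ν⟫ = ⟪μs, Lq ν⟫ := hLqsymm _ _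
  have c14 : ⟪Lq μs, νs⟫ = ⟪μs, Lq νs⟫ := hLqsymm _ _
  have c15 : ⟪b, μ⟫ = ⟪μ, b⟫ := real_inner_comm _ _
  have c16 : ⟪b, μs⟫ = ⟪μs, b⟫ := real_inner_comm _ _
  have c17 : ⟪A xs, μs⟫ = ⟪μs, A xs⟫ := real_inner_comm _ _
  -- Equality E1
  have E1 : ⟪x - xs, F1 x lam μ⟫ + ⟪lam - lams, F2 x ω⟫ + ⟪μ - μs, F3 x ν⟫
        + ⟪ω - ωs, -Lp lam⟫ + ⟪ν - νs, -Lq μ⟫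
      = (Lag x lams μs ω ν - Lag xs lam μ ωs νs)
        + (⟪x - xs, gradient f x⟫ - (f x - f xs))
        + (∑ k, lam k * (⟪x - xs, gradient (g k) x⟫ - (g k x - g k xs))) := by
    simp only [hF1, hF2, hF3, hLag, LinearMap.adjoint_inner_right,
      inner_add_right, inner_add_left, inner_sub_left, inner_sub_right,
      inner_neg_left, inner_neg_right, map_sub, inner_sum, sum_inner,
      real_inner_smul_left, real_inner_smul_right, mul_sub, sub_mul,
      Finset.sum_sub_distrib, hip1, hip2, hip3, hip4]
    linarith [c1, c2, c3, c4, c5, c6, c15]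
  -- Lower bounds for the correction terms in E1
  have hcf : ⟪x - xs, gradient f x⟫ = -⟪gradient f x, xs - x⟫ := by
    rw [real_inner_comm, ← inner_neg_right, neg_sub]
  have hd1 : 0 ≤ ⟪x - xs, gradient f x⟫ - (f x - f xs) := by
    rw [hcf]; linarith [hfx]
  have hd2 : 0 ≤ ∑ k, lam k * (⟪x - xs, gradient (g k) x⟫ - (g k x - g k xs)) := by
    refine Finset.sum_nonneg fun k _ => mul_nonneg (hlam k) ?_
    have hc : ⟪x - xs, gradient (g k) x⟫ = -⟪gradient (g k) x, xs - x⟫ := by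
      rw [real_inner_comm, ← inner_neg_right, neg_sub]
    rw [hc]; linarith [hgx k]
  -- Equality E2 for the VI at z*
  have E2 : ⟪F1 xs lams μs, x - xs⟫ + ⟪F2 xs ωs, lam - lams⟫
        + ⟪F3 xs νs, μ - μs⟫ + ⟪-Lp lams, ω - ωs⟫ + ⟪-Lq μs, ν - νs⟫
      = (Lag x lams μs ω ν - Lag xs lam μ ωs νs)
        - ((f x - f xs) - ⟪gradient f xs, x - xs⟫)
        - (∑ k, lams k * ((g k x - g k xs) - ⟪gradient (g k) xs, x - xs⟫)) := by
    simp only [hF1, hF2, hF3, hLag, LinearMap.adjoint_inner_left,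
      inner_add_right, inner_add_left, inner_sub_left, inner_sub_right,
      inner_neg_left, inner_neg_right, map_sub, inner_sum, sum_inner,
      real_inner_smul_left, real_inner_smul_right, mul_sub, sub_mul,
      Finset.sum_sub_distrib, hip1, hip2, hip3, hip4, hip5, hip6]
    linarith [c7, c8, c9, c10, c11, c12, c13, c14, c15, c16, c17]
  have hVIx := hVI x hx lam hlam μ ω ν
  rw [E2] at hVIx
  have hd3 : 0 ≤ (f x - f xs) - ⟪gradient f xs, x - xs⟫ := by linarith [hfxs]
  have hd4 : 0 ≤ ∑ k, lams k * ((g k x - g k xs) - ⟪gradient (g k) xs, x - xs⟫) := by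
    refine Finset.sum_nonneg fun k _ => mul_nonneg (hlams k) ?_
    linarith [hgxs k]
  constructor
  · rw [E1]; linarith [hd1, hd2]
  · linarith [hVIx, hd3, hd4]
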